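/- (Coreset from bicriteria solution, Lemma 5.2) Let P be a finite point set, r ≥ 0, OPT ≥ 0, and A a set with cost_{6r}(P, A) ≤ 18·OPT. Suppose T is a set containing A such that every p ∈ P with d(p, A) ≤ 12r satisfies d(p, T) ≤ r. Then cost_r(P, T) ≤ 36·OPT, where cost_α(P, S) := Σ_{p∈P} max{d(p, S) − α, 0}. -/
import Mathlib

theorem stmt_18 {M : Type*} [MetricSpace M] (P A T : Finset M)
    (hA : A.Nonempty) (hT : T.Nonempty) (hAT : A ⊆ T)
    (r OPT : ℝ) (hr : 0 ≤ r) (hOPT : 0 ≤ OPT)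
    (hcostA : ∑ p ∈ P, max (A.inf' hA (fun a => dist p a) - 6 * r) 0 ≤ 18 * OPT)
    (hcover : ∀ p ∈ P, A.inf' hA (fun a => dist p a) ≤ 12 * r →
        T.inf' hT (fun t => dist p t) ≤ r) :
    ∑ p ∈ P, max (T.inf' hT (fun t => dist p t) - r) 0 ≤ 36 * OPT := by
  have key : ∀ p ∈ P, max (T.inf' hT (fun t => dist p t) - r) 0 ≤
      2 * max (A.inf' hA (fun a => dist p a) - 6 * r) 0 := by
    intro p hp
    have hnn : 0 ≤ 2 * max (A.inf' hA (fun a => dist p a) - 6 * r) 0 := by positivity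
    by_cases h : A.inf' hA (fun a => dist p a) ≤ 12 * r
    · have := hcover p hp h
      calc max (T.inf' hT (fun t => dist p t) - r) 0 ≤ max 0 0 := by
            apply max_le_max _ le_rfl; linarith
        _ = 0 := by simp
        _ ≤ _ := hnn
    · push_neg at h
      have hTA : T.inf' hT (fun t => dist p t) ≤ A.inf' hA (fun a => dist p a) := by
        obtain ⟨a, ha, hEq⟩ := A.exists_mem_eq_inf' hA (fun a => dist p a)
        rw [hEq]
        exact Finset.inf'_le _ (hAT ha)
      have : max (A.inf' hA (fun a => dist p a) - 6 * r) 0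
          = A.inf' hA (fun a => dist p a) - 6 * r := by
        apply max_eq_left; linarith
      rw [this]
      apply max_le _ (by linarith)
      linarith
  calc ∑ p ∈ P, max (T.inf' hT (fun t => dist p t) - r) 0
      ≤ ∑ p ∈ P, 2 * max (A.inf' hA (fun a => dist p a) - 6 * r) 0 :=
        Finset.sum_le_sum key
    _ = 2 * ∑ p ∈ P, max (A.inf' hA (fun a => dist p a) - 6 * r) 0 := by
        rw [Finset.mul_sum]
    _ ≤ 36 * OPT := by linarith
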